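/- Let r be an integer with 6 ≤ r ≤ 12, and let x₂, …, x_{r−4} be nonnegative real numbers satisfying Σ_{j=2}^{r−4} ( (C(r,2) − C(r−j,2)) / C(r,2) ) · x_j ≤ 1, where C(a,2) = a(a−1)/2. Then ∏_{j=2}^{r−4} j^{x_j} ≤ Y(r), where Y(6) = 2^{5/3}, Y(7) = 3^{7/5}, Y(8) = 4^{14/11}, Y(9) = 5^{6/5}, Y(10) = 4^{3/2}, Y(11) = 4^{55/34}, and Y(12) = 3^{11/5}. -/
import Mathlib

/-- The optimal values `Y(r)` of the linear program for `6 ≤ r ≤ 12`. -/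
noncomputable def Y : ℕ → ℝ
  | 6 => (2 : ℝ) ^ ((5 : ℝ) / 3)
  | 7 => (3 : ℝ) ^ ((7 : ℝ) / 5)
  | 8 => (4 : ℝ) ^ ((14 : ℝ) / 11)
  | 9 => (5 : ℝ) ^ ((6 : ℝ) / 5)
  | 10 => (4 : ℝ) ^ ((3 : ℝ) / 2)
  | 11 => (4 : ℝ) ^ ((55 : ℝ) / 34)
  | 12 => (3 : ℝ) ^ ((11 : ℝ) / 5)
  | _ => 0

lemma le_rpow' (a b e : ℝ) (m n : ℕ) (ha : 0 ≤ a) (hb : 0 ≤ b) (hn : 0 < n)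
    (he : e = m / n) (h : a ^ n ≤ b ^ m) : a ≤ b ^ e := by
  have h' : (a ^ (n:ℝ)) ≤ (b ^ (m:ℝ)) := by
    rw [Real.rpow_natCast, Real.rpow_natCast]; exact h
  have h2 := Real.rpow_le_rpow (by positivity) h' (by positivity : (0:ℝ) ≤ 1/n)
  rw [← Real.rpow_mul ha, ← Real.rpow_mul hb, mul_one_div,
    div_self (by exact_mod_cast hn.ne' : (n:ℝ) ≠ 0), Real.rpow_one, mul_one_div] at h2
  rwa [he]

lemma key (Yv : ℝ) (hY : 1 ≤ Yv) (s : Finset ℕ) (c x : ℕ → ℝ)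
    (hx : ∀ j ∈ s, 0 ≤ x j) (hc : ∀ j ∈ s, (j : ℝ) ≤ Yv ^ (c j))
    (h1 : ∑ j ∈ s, c j * x j ≤ 1) :
    ∏ j ∈ s, (j : ℝ) ^ x j ≤ Yv := by
  have hY0 : (0:ℝ) < Yv := lt_of_lt_of_le one_pos hY
  calc ∏ j ∈ s, (j:ℝ) ^ x j ≤ ∏ j ∈ s, Yv ^ (c j * x j) := by
        apply Finset.prod_le_prod
        · intro j hj; exact Real.rpow_nonneg (Nat.cast_nonneg j) _
        · intro j hj
          rw [Real.rpow_mul hY0.le]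
          exact Real.rpow_le_rpow (Nat.cast_nonneg j) (hc j hj) (hx j hj)
    _ = Yv ^ (∑ j ∈ s, c j * x j) := by
        simp only [Real.rpow_def_of_pos hY0, ← Real.exp_sum, Finset.mul_sum]
    _ ≤ Yv ^ (1:ℝ) := Real.rpow_le_rpow_of_exponent_le hY h1
    _ = Yv := Real.rpow_one Yv

theorem stmt18 (r : ℕ) (hr6 : 6 ≤ r) (hr12 : r ≤ 12) (x : ℕ → ℝ)
    (hx : ∀ j ∈ Finset.Icc 2 (r - 4), 0 ≤ x j)
    (h1 : ∑ j ∈ Finset.Icc 2 (r - 4),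
        (((r.choose 2 : ℝ) - ((r - j).choose 2 : ℝ)) / (r.choose 2 : ℝ)) * x j ≤ 1) :
    ∏ j ∈ Finset.Icc 2 (r - 4), (j : ℝ) ^ (x j) ≤ Y r := by
  interval_cases r
  · -- r = 6
    have hY : (1:ℝ) ≤ Y 6 := by
      simp only [Y]
      exact le_rpow' 1 2 _ 5 3 (by norm_num) (by norm_num) (by norm_num) (by norm_num)
        (by norm_num)
    refine key (Y 6) hY _ _ x hx ?_ h1
    intro j hj
    fin_cases hj
    · simp only [Y]
      rw [← Real.rpow_mul (by norm_num)]
      exact le_rpow' _ 2 _ 1 1 (by norm_num) (by norm_num) (by norm_num)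
        (by norm_num [Nat.choose]) (by norm_num)

  · -- r = 7
    have hY : (1:ℝ) ≤ Y 7 := by
      simp only [Y]
      exact le_rpow' 1 3 _ 7 5 (by norm_num) (by norm_num) (by norm_num) (by norm_num)
        (by norm_num)
    refine key (Y 7) hY _ _ x hx ?_ h1
    intro j hj
    fin_cases hj
    · simp only [Y]
      rw [← Real.rpow_mul (by norm_num)]
      exact le_rpow' _ 3 _ 11 15 (by norm_num) (by norm_num) (by norm_num)
        (by norm_num [Nat.choose]) (by norm_num)
    · simp only [Y]
      rw [← Real.rpow_mul (by norm_num)]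
      exact le_rpow' _ 3 _ 1 1 (by norm_num) (by norm_num) (by norm_num)
        (by norm_num [Nat.choose]) (by norm_num)

  · -- r = 8
    have hY : (1:ℝ) ≤ Y 8 := by
      simp only [Y]
      exact le_rpow' 1 4 _ 14 11 (by norm_num) (by norm_num) (by norm_num) (by norm_num)
        (by norm_num)
    refine key (Y 8) hY _ _ x hx ?_ h1
    intro j hj
    fin_cases hj
    · simp only [Y]
      rw [← Real.rpow_mul (by norm_num)]
      exact le_rpow' _ 4 _ 13 22 (by norm_num) (by norm_num) (by norm_num)
        (by norm_num [Nat.choose]) (by norm_num)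
    · simp only [Y]
      rw [← Real.rpow_mul (by norm_num)]
      exact le_rpow' _ 4 _ 9 11 (by norm_num) (by norm_num) (by norm_num)
        (by norm_num [Nat.choose]) (by norm_num)
    · simp only [Y]
      rw [← Real.rpow_mul (by norm_num)]
      exact le_rpow' _ 4 _ 1 1 (by norm_num) (by norm_num) (by norm_num)
        (by norm_num [Nat.choose]) (by norm_num)

  · -- r = 9
    have hY : (1:ℝ) ≤ Y 9 := by
      simp only [Y]
      exact le_rpow' 1 5 _ 6 5 (by norm_num) (by norm_num) (by norm_num) (by norm_num)
        (by norm_num)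
    refine key (Y 9) hY _ _ x hx ?_ h1
    intro j hj
    fin_cases hj
    · simp only [Y]
      rw [← Real.rpow_mul (by norm_num)]
      exact le_rpow' _ 5 _ 1 2 (by norm_num) (by norm_num) (by norm_num)
        (by norm_num [Nat.choose]) (by norm_num)
    · simp only [Y]
      rw [← Real.rpow_mul (by norm_num)]
      exact le_rpow' _ 5 _ 7 10 (by norm_num) (by norm_num) (by norm_num)
        (by norm_num [Nat.choose]) (by norm_num)
    · simp only [Y]
      rw [← Real.rpow_mul (by norm_num)]
      exact le_rpow' _ 5 _ 13 15 (by norm_num) (by norm_num) (by norm_num)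
        (by norm_num [Nat.choose]) (by norm_num)
    · simp only [Y]
      rw [← Real.rpow_mul (by norm_num)]
      exact le_rpow' _ 5 _ 1 1 (by norm_num) (by norm_num) (by norm_num)
        (by norm_num [Nat.choose]) (by norm_num)

  · -- r = 10
    have hY : (1:ℝ) ≤ Y 10 := by
      simp only [Y]
      exact le_rpow' 1 4 _ 3 2 (by norm_num) (by norm_num) (by norm_num) (by norm_num)
        (by norm_num)
    refine key (Y 10) hY _ _ x hx ?_ h1
    intro j hj
    fin_cases hj
    · simp only [Y]
      rw [← Real.rpow_mul (by norm_num)]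
      exact le_rpow' _ 4 _ 17 30 (by norm_num) (by norm_num) (by norm_num)
        (by norm_num [Nat.choose]) (by norm_num)
    · simp only [Y]
      rw [← Real.rpow_mul (by norm_num)]
      exact le_rpow' _ 4 _ 4 5 (by norm_num) (by norm_num) (by norm_num)
        (by norm_num [Nat.choose]) (by norm_num)
    · simp only [Y]
      rw [← Real.rpow_mul (by norm_num)]
      exact le_rpow' _ 4 _ 1 1 (by norm_num) (by norm_num) (by norm_num)
        (by norm_num [Nat.choose]) (by norm_num)
    · simp only [Y]
      rw [← Real.rpow_mul (by norm_num)]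
      exact le_rpow' _ 4 _ 7 6 (by norm_num) (by norm_num) (by norm_num)
        (by norm_num [Nat.choose]) (by norm_num)
    · simp only [Y]
      rw [← Real.rpow_mul (by norm_num)]
      exact le_rpow' _ 4 _ 13 10 (by norm_num) (by norm_num) (by norm_num)
        (by norm_num [Nat.choose]) (by norm_num)

  · -- r = 11
    have hY : (1:ℝ) ≤ Y 11 := by
      simp only [Y]
      exact le_rpow' 1 4 _ 55 34 (by norm_num) (by norm_num) (by norm_num) (by norm_num)
        (by norm_num)
    refine key (Y 11) hY _ _ x hx ?_ h1
    intro j hj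
    fin_cases hj
    · simp only [Y]
      rw [← Real.rpow_mul (by norm_num)]
      exact le_rpow' _ 4 _ 19 34 (by norm_num) (by norm_num) (by norm_num)
        (by norm_num [Nat.choose]) (by norm_num)
    · simp only [Y]
      rw [← Real.rpow_mul (by norm_num)]
      exact le_rpow' _ 4 _ 27 34 (by norm_num) (by norm_num) (by norm_num)
        (by norm_num [Nat.choose]) (by norm_num)
    · simp only [Y]
      rw [← Real.rpow_mul (by norm_num)]
      exact le_rpow' _ 4 _ 1 1 (by norm_num) (by norm_num) (by norm_num)
        (by norm_num [Nat.choose]) (by norm_num)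
    · simp only [Y]
      rw [← Real.rpow_mul (by norm_num)]
      exact le_rpow' _ 4 _ 20 17 (by norm_num) (by norm_num) (by norm_num)
        (by norm_num [Nat.choose]) (by norm_num)
    · simp only [Y]
      rw [← Real.rpow_mul (by norm_num)]
      exact le_rpow' _ 4 _ 45 34 (by norm_num) (by norm_num) (by norm_num)
        (by norm_num [Nat.choose]) (by norm_num)
    · simp only [Y]
      rw [← Real.rpow_mul (by norm_num)]
      exact le_rpow' _ 4 _ 49 34 (by norm_num) (by norm_num) (by norm_num)
        (by norm_num [Nat.choose]) (by norm_num)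

  · -- r = 12
    have hY : (1:ℝ) ≤ Y 12 := by
      simp only [Y]
      exact le_rpow' 1 3 _ 11 5 (by norm_num) (by norm_num) (by norm_num) (by norm_num)
        (by norm_num)
    refine key (Y 12) hY _ _ x hx ?_ h1
    intro j hj
    fin_cases hj
    · simp only [Y]
      rw [← Real.rpow_mul (by norm_num)]
      exact le_rpow' _ 3 _ 7 10 (by norm_num) (by norm_num) (by norm_num)
        (by norm_num [Nat.choose]) (by norm_num)
    · simp only [Y]
      rw [← Real.rpow_mul (by norm_num)]
      exact le_rpow' _ 3 _ 1 1 (by norm_num) (by norm_num) (by norm_num)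
        (by norm_num [Nat.choose]) (by norm_num)
    · simp only [Y]
      rw [← Real.rpow_mul (by norm_num)]
      exact le_rpow' _ 3 _ 19 15 (by norm_num) (by norm_num) (by norm_num)
        (by norm_num [Nat.choose]) (by norm_num)
    · simp only [Y]
      rw [← Real.rpow_mul (by norm_num)]
      exact le_rpow' _ 3 _ 3 2 (by norm_num) (by norm_num) (by norm_num)
        (by norm_num [Nat.choose]) (by norm_num)
    · simp only [Y]
      rw [← Real.rpow_mul (by norm_num)]
      exact le_rpow' _ 3 _ 17 10 (by norm_num) (by norm_num) (by norm_num)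
        (by norm_num [Nat.choose]) (by norm_num)
    · simp only [Y]
      rw [← Real.rpow_mul (by norm_num)]
      exact le_rpow' _ 3 _ 28 15 (by norm_num) (by norm_num) (by norm_num)
        (by norm_num [Nat.choose]) (by norm_num)
    · simp only [Y]
      rw [← Real.rpow_mul (by norm_num)]
      exact le_rpow' _ 3 _ 2 1 (by norm_num) (by norm_num) (by norm_num)
        (by norm_num [Nat.choose]) (by norm_num)
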